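/- For all positive integers x and y with x ≥ 7y, the binomial coefficient satisfies C(x + y, y) ≤ e^{x/2}. -/

import Mathlib

/-- The counting inequality: for positive integers `x, y` with `x ≥ 7y`,
`C(x + y, y) ≤ e^{x/2}`. -/
theorem choose_le_exp_half (x y : ℕ) (hx : 0 < x) (hy : 0 < y) (hxy : 7 * y ≤ x) :
    ((x + y).choose y : ℝ) ≤ Real.exp ((x : ℝ) / 2) := by
  set X : ℝ := (x : ℝ) with hX
  set Y : ℝ := (y : ℝ) with hY
  have hY0 : (0:ℝ) < Y := by rw [hY]; exact_mod_cast hy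
  have hX0 : (0:ℝ) < X := by rw [hX]; exact_mod_cast hx
  have h7 : 7 * Y ≤ X := by rw [hX, hY]; exact_mod_cast hxy
  -- step 1: choose ≤ (x+y)^y / y!
  have h1 : ((x + y).choose y : ℝ) ≤ ((x + y : ℕ) : ℝ) ^ y / (y.factorial : ℝ) :=
    Nat.choose_le_pow_div y (x + y)
  -- step 2: y^y / y! ≤ exp y
  have h2 : Y ^ y / (y.factorial : ℝ) ≤ Real.exp Y := by
    have := Real.sum_le_exp_of_nonneg hY0.le (y + 1)
    have hmem : y ∈ Finset.range (y + 1) := Finset.self_mem_range_succ y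
    have hterm := Finset.single_le_sum
      (f := fun i => Y ^ i / (i.factorial : ℝ))
      (fun i _ => by positivity) hmem
    linarith
  set t : ℝ := (X + Y) / Y with ht
  have ht0 : 0 < t := by positivity
  -- (x+y)^y = (t*y)^y = t^y * y^y
  have hcast : ((x + y : ℕ) : ℝ) = X + Y := by push_cast; ring
  have hXY : X + Y = t * Y := by rw [ht, div_mul_cancel₀ _ hY0.ne']
  have h3 : ((x + y : ℕ) : ℝ) ^ y / (y.factorial : ℝ)
      ≤ t ^ y * Real.exp Y := by
    rw [hcast, hXY, mul_pow, mul_div_assoc]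
    exact mul_le_mul_of_nonneg_left h2 (by positivity)
  -- t^y = exp (y * log t)
  have h4 : t ^ y = Real.exp (Y * Real.log t) := by
    rw [Real.exp_nat_mul, Real.exp_log ht0]
  -- log t ≤ t/8 + log 8 - 1
  have h5 : Real.log t ≤ t / 8 + Real.log 8 - 1 := by
    have := Real.log_le_sub_one_of_pos (show (0:ℝ) < t / 8 by positivity)
    have hlog : Real.log (t / 8) = Real.log t - Real.log 8 := by
      rw [Real.log_div (ne_of_gt ht0) (by norm_num)]
    linarith [hlog ▸ this]
  -- exponent bound
  have hl8 : Real.log 8 < 2.08 := by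
    have h2' : Real.log 2 < 0.6931471808 := Real.log_two_lt_d9
    have : (8:ℝ) = 2 ^ 3 := by norm_num
    rw [this, Real.log_pow]
    push_cast
    linarith
  have hty : t * Y = X + Y := hXY.symm
  have h6 : Y * Real.log t + Y ≤ X / 2 := by
    have hb : Y * Real.log t ≤ Y * (t / 8 + Real.log 8 - 1) :=
      mul_le_mul_of_nonneg_left h5 hY0.le
    have : Y * (t / 8 + Real.log 8 - 1) = (X + Y) / 8 + Y * Real.log 8 - Y := by
      field_simp
      nlinarith [hty]
    rw [this] at hb
    nlinarith [mul_le_mul_of_nonneg_left hl8.le hY0.le]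
  calc ((x + y).choose y : ℝ) ≤ ((x + y : ℕ) : ℝ) ^ y / (y.factorial : ℝ) := h1
    _ ≤ t ^ y * Real.exp Y := h3
    _ = Real.exp (Y * Real.log t + Y) := by rw [h4, ← Real.exp_add]
    _ ≤ Real.exp (X / 2) := Real.exp_le_exp.mpr h6
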